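/- Let Q be a dyadic cube in ℝ^d and let E be a measurable subset of Q with 0 < λ(E) < λ(Q). Then there exists a dyadic cube W contained in Q such that min{λ(W \ E), λ(W ∩ E)} ≥ 2^{−d}·(1 − 2^{−d})·λ(W). -/

import Mathlib

open MeasureTheory Set

/-- A dyadic cube in `ℝ^d`: `∏_i [kᵢ·2^{−n}, (kᵢ+1)·2^{−n}]` with `n ∈ ℤ`, `kᵢ ∈ ℤ`. -/
def IsDyadicCube {d : ℕ} (Q : Set (Fin d → ℝ)) : Prop :=
  ∃ (n : ℤ) (k : Fin d → ℤ),
    Q = Set.univ.pi fun i =>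
      Set.Icc ((k i : ℝ) * (2:ℝ) ^ (-n)) (((k i : ℝ) + 1) * (2:ℝ) ^ (-n))

namespace Stmt17Aux

open Metric Filter

/-! ### Dyadic cubes -/

def dcube (d : ℕ) (n : ℤ) (k : Fin d → ℤ) : Set (Fin d → ℝ) :=
  Set.univ.pi fun i =>
    Set.Icc ((k i : ℝ) * (2:ℝ) ^ (-n)) (((k i : ℝ) + 1) * (2:ℝ) ^ (-n))

lemma isDyadicCube_dcube (d : ℕ) (n : ℤ) (k : Fin d → ℤ) : IsDyadicCube (dcube d n k) :=
  ⟨n, k, rfl⟩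

lemma measurableSet_dcube (d : ℕ) (n : ℤ) (k : Fin d → ℤ) : MeasurableSet (dcube d n k) :=
  MeasurableSet.univ_pi fun _ => measurableSet_Icc

lemma volume_dcube (d : ℕ) (n : ℤ) (k : Fin d → ℤ) :
    volume (dcube d n k) = ENNReal.ofReal (((2:ℝ) ^ (-n)) ^ d) := by
  rw [dcube, volume_pi_pi]
  have : ∀ i : Fin d, volume (Set.Icc ((k i : ℝ) * (2:ℝ) ^ (-n)) (((k i : ℝ) + 1) * (2:ℝ) ^ (-n)))
      = ENNReal.ofReal ((2:ℝ) ^ (-n)) := by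
    intro i; rw [Real.volume_Icc]; ring_nf
  simp only [this, Finset.prod_const, Finset.card_univ, Fintype.card_fin]
  rw [ENNReal.ofReal_pow (by positivity)]

lemma volume_dcube_ne_top (d : ℕ) (n : ℤ) (k : Fin d → ℤ) : volume (dcube d n k) ≠ ⊤ := by
  rw [volume_dcube]; exact ENNReal.ofReal_ne_top

noncomputable def kOf (d : ℕ) (x : Fin d → ℝ) (n : ℤ) : Fin d → ℤ := fun i => ⌊x i * (2:ℝ) ^ n⌋

lemma zpow2_pos (n : ℤ) : (0:ℝ) < (2:ℝ) ^ n := by positivity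

lemma mulneg_le (a b : ℝ) (n : ℤ) : a * (2:ℝ) ^ (-n) ≤ b ↔ a ≤ b * (2:ℝ) ^ n := by
  rw [zpow_neg, ← div_eq_mul_inv, div_le_iff₀ (zpow2_pos n)]

lemma le_mulneg (a b : ℝ) (n : ℤ) : b ≤ a * (2:ℝ) ^ (-n) ↔ b * (2:ℝ) ^ n ≤ a := by
  rw [zpow_neg, ← div_eq_mul_inv, le_div_iff₀ (zpow2_pos n)]

lemma mem_dcube_iff {d : ℕ} {x : Fin d → ℝ} {n : ℤ} {k : Fin d → ℤ} :
    x ∈ dcube d n k ↔ ∀ i, (k i : ℝ) ≤ x i * (2:ℝ) ^ n ∧ x i * (2:ℝ) ^ n ≤ (k i : ℝ) + 1 := by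
  constructor
  · intro h i
    obtain ⟨h1, h2⟩ := h i (mem_univ i)
    exact ⟨(mulneg_le _ _ _).1 h1, (le_mulneg _ _ _).1 h2⟩
  · intro h i _
    exact ⟨(mulneg_le _ _ _).2 (h i).1, (le_mulneg _ _ _).2 (h i).2⟩

lemma mem_dcube_kOf (d : ℕ) (x : Fin d → ℝ) (n : ℤ) : x ∈ dcube d n (kOf d x n) :=
  mem_dcube_iff.2 fun i => ⟨Int.floor_le _, (Int.lt_floor_add_one _).le⟩

lemma dcube_succ_subset (d : ℕ) (x : Fin d → ℝ) (n : ℤ) :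
    dcube d (n + 1) (kOf d x (n + 1)) ⊆ dcube d n (kOf d x n) := by
  intro y hy
  rw [mem_dcube_iff] at hy ⊢
  intro i
  obtain ⟨h1, h2⟩ := hy i
  have e : y i * (2:ℝ) ^ (n + 1) = (y i * 2 ^ n) * 2 := by
    rw [zpow_add₀ (two_ne_zero), zpow_one]; ring
  rw [e] at h1 h2
  have hfl : (2 : ℝ) * ⌊x i * 2 ^ n⌋ ≤ ⌊x i * 2 ^ (n+1)⌋ := by
    have : ((2 * ⌊x i * 2 ^ n⌋ : ℤ) : ℝ) ≤ x i * 2 ^ (n+1) := by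
      push_cast
      rw [zpow_add₀ (two_ne_zero), zpow_one]
      nlinarith [Int.floor_le (x i * 2 ^ n)]
    exact_mod_cast Int.le_floor.2 this
  have hfu : (⌊x i * 2 ^ (n+1)⌋ : ℝ) ≤ 2 * ⌊x i * 2 ^ n⌋ + 1 := by
    have : ⌊x i * 2 ^ (n+1)⌋ < 2 * ⌊x i * 2 ^ n⌋ + 2 := by
      apply Int.floor_lt.2
      push_cast
      rw [zpow_add₀ (two_ne_zero), zpow_one]
      nlinarith [Int.lt_floor_add_one (x i * 2 ^ n)]
    exact_mod_cast (by omega : ⌊x i * 2 ^ (n+1)⌋ ≤ 2 * ⌊x i * 2 ^ n⌋ + 1)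
  simp only [kOf] at h1 h2 ⊢
  constructor
  · linarith
  · linarith

lemma dcube_add_subset (d : ℕ) (x : Fin d → ℝ) (n : ℤ) (j : ℕ) :
    dcube d (n + j) (kOf d x (n + j)) ⊆ dcube d n (kOf d x n) := by
  induction j with
  | zero => simp
  | succ j ih =>
      refine subset_trans ?_ ih
      have : (n + ((j:ℤ)+1)) = (n + j) + 1 := by ring
      rw [show ((j+1:ℕ):ℤ) = (j:ℤ)+1 by push_cast; ring, this]
      exact dcube_succ_subset d x (n + j)

lemma kOf_eq_of_interior {d : ℕ} {x : Fin d → ℝ} {n : ℤ} {k : Fin d → ℤ}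
    (h : ∀ i, (k i : ℝ) * (2:ℝ) ^ (-n) < x i ∧ x i < ((k i : ℝ) + 1) * (2:ℝ) ^ (-n)) :
    kOf d x n = k := by
  funext i
  obtain ⟨h1, h2⟩ := h i
  have h2p : (0:ℝ) < (2:ℝ) ^ n := by positivity
  apply Int.floor_eq_iff.2
  constructor
  · have := mul_lt_mul_of_pos_right h1 h2p
    rw [mul_assoc, ← zpow_add₀ (two_ne_zero : (2:ℝ) ≠ 0) (-n) n] at this
    simpa using this.le
  · have := mul_lt_mul_of_pos_right h2 h2p
    rw [mul_assoc, ← zpow_add₀ (two_ne_zero : (2:ℝ) ≠ 0) (-n) n] at this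
    simpa using this

lemma dcube_subset_closedBall (d : ℕ) (x : Fin d → ℝ) (n : ℤ) :
    dcube d n (kOf d x n) ⊆ closedBall x ((2:ℝ) ^ (-n)) := by
  have hx := mem_dcube_kOf d x n
  intro y hy
  rw [mem_closedBall]
  rw [dist_pi_le_iff (by positivity)]
  intro i
  have h1 := hy i (mem_univ i)
  have h2 := hx i (mem_univ i)
  rw [Real.dist_eq, abs_sub_le_iff]
  obtain ⟨a1, a2⟩ := h1; obtain ⟨b1, b2⟩ := h2
  constructor <;> nlinarith

lemma volume_closedBall_pi (d : ℕ) (x : Fin d → ℝ) (r : ℝ) (hr : 0 ≤ r) :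
    volume (closedBall x r) = ENNReal.ofReal ((2*r) ^ d) := by
  rw [closedBall_pi x hr]
  have h1 : ∀ i : Fin d, closedBall (x i) r = Set.Icc (x i - r) (x i + r) := fun i =>
    Real.closedBall_eq_Icc
  simp only [h1]
  rw [volume_pi_pi]
  have : ∀ i : Fin d, volume (Set.Icc (x i - r) (x i + r)) = ENNReal.ofReal (2*r) := by
    intro i; rw [Real.volume_Icc]; ring_nf
  simp only [this, Finset.prod_const, Finset.card_univ, Fintype.card_fin]
  rw [ENNReal.ofReal_pow (by positivity)]

/-! ### ENNReal helpers -/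

lemma aux_cancel {u v a b : ENNReal} (hsum : u + v = a + b) (hb : v ≤ b) (hbtop : b ≠ ⊤) :
    a ≤ u := by
  have h : b + a ≤ b + u := by
    calc b + a = a + b := add_comm _ _
    _ = u + v := hsum.symm
    _ ≤ u + b := add_le_add_right hb u
    _ = b + u := add_comm _ _
  exact ENNReal.le_of_add_le_add_left hbtop h

lemma split_one (a b : ℝ) (ha : 0 ≤ a) (hb : 0 ≤ b) (hab : a + b = 1) (v : ENNReal) :
    ENNReal.ofReal a * v + ENNReal.ofReal b * v = v := by
  rw [← add_mul, ← ENNReal.ofReal_add ha hb, hab, ENNReal.ofReal_one, one_mul]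

/-! ### The constant -/

noncomputable def cst (d : ℕ) : ℝ := (2:ℝ) ^ (-(d:ℤ)) * (1 - (2:ℝ) ^ (-(d:ℤ)))

lemma twopow_pos (d : ℕ) : (0:ℝ) < (2:ℝ) ^ (-(d:ℤ)) := zpow2_pos _

lemma twopow_lt_one {d : ℕ} (hd : 0 < d) : (2:ℝ) ^ (-(d:ℤ)) < 1 := by
  rw [zpow_neg, zpow_natCast]
  rw [inv_lt_one_iff₀]
  right
  exact one_lt_pow₀ (by norm_num) (by omega)

lemma twopow_le_one (d : ℕ) : (2:ℝ) ^ (-(d:ℤ)) ≤ 1 := by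
  rw [zpow_neg, zpow_natCast, inv_le_one_iff₀]
  right
  exact one_le_pow₀ (by norm_num)
  
lemma cst_nonneg (d : ℕ) : 0 ≤ cst d := by
  have := twopow_pos d
  have := twopow_le_one d
  unfold cst; nlinarith

lemma cst_le_twopow (d : ℕ) : cst d ≤ (2:ℝ) ^ (-(d:ℤ)) := by
  have := twopow_pos d
  have := twopow_le_one d
  unfold cst; nlinarith

lemma cst_lt_one (d : ℕ) : cst d < 1 := by
  have h1 := twopow_pos d
  have h2 := twopow_le_one d
  unfold cst; nlinarith

lemma twopow_mul_pow (d : ℕ) : (2:ℝ) ^ (-(d:ℤ)) * (2:ℝ) ^ d = 1 := by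
  rw [← zpow_natCast (2:ℝ) d, ← zpow_add₀ (two_ne_zero : (2:ℝ) ≠ 0)]
  simp


lemma lemA {d : ℕ} (hd : 0 < d) (n : ℤ) (k : Fin d → ℤ) {E : Set (Fin d → ℝ)}
    (hE : MeasurableSet E) (hEQ : E ⊆ dcube d n k) (h1 : 0 < volume E)
    (h2 : volume E < ENNReal.ofReal (cst d) * volume (dcube d n k)) :
    ∃ W : Set (Fin d → ℝ), IsDyadicCube W ∧ W ⊆ dcube d n k ∧
      ENNReal.ofReal (cst d) * volume W ≤ min (volume (W \ E)) (volume (W ∩ E)) := by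
  -- the open box inside the cube
  set openQ : Set (Fin d → ℝ) :=
    Set.univ.pi (fun i => Set.Ioo ((k i : ℝ) * (2:ℝ) ^ (-n)) (((k i : ℝ) + 1) * (2:ℝ) ^ (-n)))
    with hoQdef
  have hoQmeas : MeasurableSet openQ := MeasurableSet.univ_pi fun _ => measurableSet_Ioo
  have haeeq : openQ =ᵐ[volume] dcube d n k := by
    have h := Measure.pi_Ioo_ae_eq_pi_Icc (μ := fun _ : Fin d => (volume : Measure ℝ))
      (s := Set.univ)
      (f := fun i => (k i : ℝ) * (2:ℝ) ^ (-n)) (g := fun i => ((k i : ℝ) + 1) * (2:ℝ) ^ (-n))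
    exact h
  have hnullQ : volume (dcube d n k \ openQ) = 0 := (ae_eq_set.1 haeeq).2
  have hnull : volume (E \ openQ) = 0 :=
    measure_mono_null (diff_subset_diff_left hEQ) hnullQ
  -- a density point of E inside the open box
  obtain ⟨x, hxopen, hxtend⟩ : ∃ x, x ∈ openQ ∧
      Tendsto (fun r => volume (E ∩ closedBall x r) / volume (closedBall x r))
        (nhdsWithin 0 (Set.Ioi 0)) (nhds 1) := by
    have hae := Besicovitch.ae_tendsto_measure_inter_div volume E
    have hkey : volume ({a : Fin d → ℝ | a ∉ openQ} ∩ E) = 0 := by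
      have : {a : Fin d → ℝ | a ∉ openQ} ∩ E = E \ openQ := by
        ext z; simp [Set.mem_diff, and_comm]
      rw [this]; exact hnull
    have hmem : ∀ᵐ x ∂(volume.restrict E), x ∈ openQ := by
      rw [ae_iff, show {a : Fin d → ℝ | ¬ a ∈ openQ} = openQᶜ from rfl,
        Measure.restrict_apply hoQmeas.compl]
      rw [Set.compl_def]
      exact hkey
    haveI : (ae (volume.restrict E)).NeBot := by
      rw [ae_neBot]
      exact fun h => absurd (Measure.restrict_eq_zero.1 h) h1.ne'
    exact (hmem.and hae).exists
  have hkx : kOf d x n = k :=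
    kOf_eq_of_interior (fun i => mem_Ioo.1 (hxopen i (mem_univ i)))
  -- choose a small scale
  set ε : ℝ := (1 - cst d) * (2:ℝ) ^ (-(d:ℤ)) with hεdef
  have hclt := cst_lt_one d
  have hcnn := cst_nonneg d
  have htpp := twopow_pos d
  have htple := twopow_le_one d
  have hεpos : 0 < ε := mul_pos (by linarith) htpp
  have hε1 : ε ≤ 1 := by nlinarith
  obtain ⟨j, hj⟩ : ∃ j : ℕ, 1 - ENNReal.ofReal ε <
      volume (E ∩ closedBall x ((2:ℝ) ^ (-(n + j : ℤ)))) /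
        volume (closedBall x ((2:ℝ) ^ (-(n + j : ℤ)))) := by
    have heq : (fun j : ℕ => (2:ℝ) ^ (-(n + j : ℤ))) =
        fun j : ℕ => (2:ℝ) ^ (-n) * ((1:ℝ)/2) ^ j := by
      funext j
      rw [neg_add, zpow_add₀ (two_ne_zero : (2:ℝ) ≠ 0)]
      congr 1
      rw [one_div, inv_pow, zpow_neg, zpow_natCast]
    have h0 : Tendsto (fun j : ℕ => (2:ℝ) ^ (-(n + j : ℤ))) atTop (nhds 0) := by
      rw [heq]
      have := tendsto_pow_atTop_nhds_zero_of_lt_one (by norm_num : (0:ℝ) ≤ 1/2)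
        (by norm_num : (1:ℝ)/2 < 1)
      simpa using this.const_mul ((2:ℝ) ^ (-n))
    have hseq : Tendsto (fun j : ℕ => (2:ℝ) ^ (-(n + j : ℤ))) atTop
        (nhdsWithin 0 (Set.Ioi 0)) := by
      apply tendsto_nhdsWithin_of_tendsto_nhds_of_eventually_within _ h0
      filter_upwards with j
      exact Set.mem_Ioi.2 (by positivity)
    have hεE0 : ENNReal.ofReal ε ≠ 0 := by
      simp only [ne_eq, ENNReal.ofReal_eq_zero, not_le]; exact hεpos
    have hlt : (1 : ENNReal) - ENNReal.ofReal ε < 1 :=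
      ENNReal.sub_lt_self ENNReal.one_ne_top one_ne_zero hεE0
    exact ((hxtend.comp hseq).eventually (lt_mem_nhds hlt)).exists
  -- the small cube W around x
  set m : ℤ := n + j with hmdef
  set r : ℝ := (2:ℝ) ^ (-m) with hrdef
  have hrpos : 0 < r := zpow2_pos _
  set W : Set (Fin d → ℝ) := dcube d m (kOf d x m) with hWdef
  have hWQ : W ⊆ dcube d n k := by
    rw [hWdef, ← hkx]; exact dcube_add_subset d x n j
  have hWB : W ⊆ closedBall x r := dcube_subset_closedBall d x m
  have hvolW : volume W = ENNReal.ofReal (r ^ d) := volume_dcube d m _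
  have hvolWt : volume W ≠ ⊤ := by rw [hvolW]; exact ENNReal.ofReal_ne_top
  have hvolB : volume (closedBall x r) = ENNReal.ofReal ((2*r) ^ d) :=
    volume_closedBall_pi d x r hrpos.le
  have hB0 : volume (closedBall x r) ≠ 0 := by
    rw [hvolB]
    simp only [ne_eq, ENNReal.ofReal_eq_zero, not_le]
    positivity
  have hBt : volume (closedBall x r) ≠ ⊤ := by rw [hvolB]; exact ENNReal.ofReal_ne_top
  have hratio : (1 - ENNReal.ofReal ε) * volume (closedBall x r) <
      volume (E ∩ closedBall x r) :=
    (ENNReal.lt_div_iff_mul_lt (Or.inl hB0) (Or.inl hBt)).1 hj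
  have hεE1 : ENNReal.ofReal ε ≤ 1 := by
    rw [← ENNReal.ofReal_one]; exact ENNReal.ofReal_le_ofReal hε1
  -- the ball is mostly inside E
  have hBdiff : volume (closedBall x r \ E) ≤
      ENNReal.ofReal ε * volume (closedBall x r) := by
    refine aux_cancel (v := (1 - ENNReal.ofReal ε) * volume (closedBall x r))
      (b := volume (closedBall x r ∩ E)) ?_ ?_ ?_
    · rw [← add_mul, add_tsub_cancel_of_le hεE1, one_mul]
      rw [add_comm (volume (closedBall x r \ E))]
      exact (measure_inter_add_diff (closedBall x r) hE).symm
    · rw [inter_comm]; exact hratio.le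
    · exact ne_top_of_le_ne_top hBt (measure_mono inter_subset_left)
  -- so is the cube W
  have hWdiff : volume (W \ E) ≤ ENNReal.ofReal (1 - cst d) * volume W := by
    have hreal : ε * (2*r) ^ d = (1 - cst d) * r ^ d := by
      have h2d := twopow_mul_pow d
      calc ε * (2*r) ^ d = (1 - cst d) * ((2:ℝ) ^ (-(d:ℤ)) * 2 ^ d) * r ^ d := by
            rw [hεdef, mul_pow]; ring
      _ = (1 - cst d) * r ^ d := by rw [h2d]; ring
    calc volume (W \ E) ≤ volume (closedBall x r \ E) :=
          measure_mono (diff_subset_diff_left hWB)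
    _ ≤ ENNReal.ofReal ε * volume (closedBall x r) := hBdiff
    _ = ENNReal.ofReal (ε * (2*r) ^ d) := by
          rw [hvolB, ← ENNReal.ofReal_mul hεpos.le]
    _ = ENNReal.ofReal ((1 - cst d) * r ^ d) := by rw [hreal]
    _ = ENNReal.ofReal (1 - cst d) * volume W := by
          rw [hvolW, ← ENNReal.ofReal_mul (by linarith)]
  -- hence W has large intersection with E
  have hGoodm : ENNReal.ofReal (cst d) * volume W ≤ volume (W ∩ E) := by
    refine aux_cancel (v := volume (W \ E))
      (b := ENNReal.ofReal (1 - cst d) * volume W) ?_ hWdiff ?_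
    · rw [measure_inter_add_diff W hE]
      exact (split_one _ _ hcnn (by linarith) (by ring) (volume W)).symm
    · exact ENNReal.mul_ne_top ENNReal.ofReal_ne_top hvolWt
  -- climbing: find the first good cube on the way down from Q to W
  have hclimb : ∀ j' : ℕ,
      ENNReal.ofReal (cst d) * volume (dcube d (n + j') (kOf d x (n + j'))) ≤
        volume (dcube d (n + j') (kOf d x (n + j')) ∩ E) →
      ∃ W : Set (Fin d → ℝ), IsDyadicCube W ∧ W ⊆ dcube d n k ∧
        ENNReal.ofReal (cst d) * volume W ≤ min (volume (W \ E)) (volume (W ∩ E)) := by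
    intro j'
    induction j' with
    | zero =>
        intro hG
        exfalso
        simp only [Nat.cast_zero, add_zero] at hG
        rw [hkx, Set.inter_eq_right.2 hEQ] at hG
        exact absurd h2 (not_lt.2 hG)
    | succ j' ih =>
        intro hG
        by_cases hG' : ENNReal.ofReal (cst d) * volume (dcube d (n + j') (kOf d x (n + j'))) ≤
            volume (dcube d (n + j') (kOf d x (n + j')) ∩ E)
        · exact ih hG'
        push_neg at hG'
        have hcast : (n + ((j'+1 : ℕ) : ℤ)) = (n + j') + 1 := by push_cast; ring
        rw [hcast] at hG
        set g : ℤ := n + j' with hgdef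
        set W' : Set (Fin d → ℝ) := dcube d (g+1) (kOf d x (g+1)) with hW'def
        have hsubP : W' ⊆ dcube d g (kOf d x g) := dcube_succ_subset d x g
        have hsubQ : W' ⊆ dcube d n k := by
          rw [← hkx]
          have h' := dcube_add_subset d x n (j'+1)
          rwa [hcast] at h'
        have hvolW' : volume W' = ENNReal.ofReal (((2:ℝ) ^ (-(g+1))) ^ d) :=
          volume_dcube d (g+1) _
        have hvolW't : volume W' ≠ ⊤ := by rw [hvolW']; exact ENNReal.ofReal_ne_top
        have ht : (2:ℝ) ^ (-g) = 2 * (2:ℝ) ^ (-(g+1)) := by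
          rw [show -g = -(g+1)+1 by ring, zpow_add₀ (two_ne_zero : (2:ℝ) ≠ 0), zpow_one]
          ring
        have hinterle : volume (W' ∩ E) ≤
            ENNReal.ofReal (1 - (2:ℝ) ^ (-(d:ℤ))) * volume W' := by
          have hreal : cst d * ((2:ℝ) ^ (-g)) ^ d
              = (1 - (2:ℝ) ^ (-(d:ℤ))) * ((2:ℝ) ^ (-(g+1))) ^ d := by
            have h2d := twopow_mul_pow d
            calc cst d * ((2:ℝ) ^ (-g)) ^ d
                = (1 - (2:ℝ) ^ (-(d:ℤ))) * ((2:ℝ) ^ (-(d:ℤ)) * 2 ^ d) *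
                    ((2:ℝ) ^ (-(g+1))) ^ d := by rw [ht, mul_pow, cst]; ring
            _ = (1 - (2:ℝ) ^ (-(d:ℤ))) * ((2:ℝ) ^ (-(g+1))) ^ d := by rw [h2d]; ring
          calc volume (W' ∩ E) ≤ volume (dcube d g (kOf d x g) ∩ E) :=
                measure_mono (inter_subset_inter_left E hsubP)
          _ ≤ ENNReal.ofReal (cst d) * volume (dcube d g (kOf d x g)) := hG'.le
          _ = ENNReal.ofReal (cst d * ((2:ℝ) ^ (-g)) ^ d) := by
                rw [volume_dcube, ← ENNReal.ofReal_mul hcnn]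
          _ = ENNReal.ofReal ((1 - (2:ℝ) ^ (-(d:ℤ))) * ((2:ℝ) ^ (-(g+1))) ^ d) := by
                rw [hreal]
          _ = ENNReal.ofReal (1 - (2:ℝ) ^ (-(d:ℤ))) * volume W' := by
                rw [hvolW', ← ENNReal.ofReal_mul (by linarith)]
        have hdiffge : ENNReal.ofReal ((2:ℝ) ^ (-(d:ℤ))) * volume W' ≤ volume (W' \ E) := by
          refine aux_cancel (v := volume (W' ∩ E))
            (b := ENNReal.ofReal (1 - (2:ℝ) ^ (-(d:ℤ))) * volume W') ?_ hinterle ?_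
          · rw [add_comm (volume (W' \ E)), measure_inter_add_diff W' hE]
            exact (split_one _ _ htpp.le (by linarith) (by ring) (volume W')).symm
          · exact ENNReal.mul_ne_top ENNReal.ofReal_ne_top hvolW't
        refine ⟨W', isDyadicCube_dcube _ _ _, hsubQ, le_min ?_ ?_⟩
        · refine le_trans ?_ hdiffge
          exact mul_le_mul_left (ENNReal.ofReal_le_ofReal (cst_le_twopow d)) _
        · exact hG
  exact hclimb j hGoodm

end Stmt17Aux

theorem stmt17 {d : ℕ} (Q : Set (Fin d → ℝ)) (hQ : IsDyadicCube Q)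
    (E : Set (Fin d → ℝ)) (hE : MeasurableSet E) (hEQ : E ⊆ Q)
    (h1 : 0 < volume E) (h2 : volume E < volume Q) :
    ∃ W : Set (Fin d → ℝ), IsDyadicCube W ∧ W ⊆ Q ∧
      ENNReal.ofReal ((2:ℝ) ^ (-(d:ℤ)) * (1 - (2:ℝ) ^ (-(d:ℤ)))) * volume W ≤
        min (volume (W \ E)) (volume (W ∩ E)) := by
  open Stmt17Aux in
  rcases Nat.eq_zero_or_pos d with hd | hd
  · subst hd
    refine ⟨Q, hQ, subset_rfl, ?_⟩
    norm_num
  · have hcst : ∀ v : ENNReal,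
        ENNReal.ofReal ((2:ℝ) ^ (-(d:ℤ)) * (1 - (2:ℝ) ^ (-(d:ℤ)))) * v
          = ENNReal.ofReal (Stmt17Aux.cst d) * v := fun _ => rfl
    obtain ⟨n, k, hQk⟩ := hQ
    have hQd : Q = Stmt17Aux.dcube d n k := hQk
    subst hQd
    have hQmeas : MeasurableSet (Stmt17Aux.dcube d n k) := Stmt17Aux.measurableSet_dcube d n k
    have hQt : volume (Stmt17Aux.dcube d n k) ≠ ⊤ := Stmt17Aux.volume_dcube_ne_top d n k
    by_cases hc1 : volume E < ENNReal.ofReal (Stmt17Aux.cst d) * volume (Stmt17Aux.dcube d n k)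
    · obtain ⟨W, hW1, hW2, hW3⟩ := Stmt17Aux.lemA hd n k hE hEQ h1 hc1
      exact ⟨W, hW1, hW2, by rw [hcst]; exact hW3⟩
    · set E' : Set (Fin d → ℝ) := Stmt17Aux.dcube d n k \ E with hE'def
      have hE'meas : MeasurableSet E' := hQmeas.diff hE
      have hE'Q : E' ⊆ Stmt17Aux.dcube d n k := diff_subset
      have hEt : volume E ≠ ⊤ := ne_top_of_lt h2
      have hvolE' : volume E' = volume (Stmt17Aux.dcube d n k) - volume E :=
        measure_diff hEQ hE.nullMeasurableSet hEt
      have h1' : 0 < volume E' := by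
        rw [hvolE']
        exact tsub_pos_of_lt h2
      by_cases hc2 : volume E' < ENNReal.ofReal (Stmt17Aux.cst d) * volume (Stmt17Aux.dcube d n k)
      · obtain ⟨W, hW1, hW2, hW3⟩ := Stmt17Aux.lemA hd n k hE'meas hE'Q h1' hc2
        refine ⟨W, hW1, hW2, ?_⟩
        have e1 : W ∩ E' = W \ E := by
          rw [hE'def]
          ext z
          simp only [mem_inter_iff, mem_diff]
          exact ⟨fun ⟨h, _, he⟩ => ⟨h, he⟩, fun ⟨h, he⟩ => ⟨h, hW2 h, he⟩⟩
        have e2 : W \ E' = W ∩ E := by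
          rw [hE'def]
          ext z
          simp only [mem_diff, mem_inter_iff, not_and, not_not]
          exact ⟨fun ⟨h, he⟩ => ⟨h, he (hW2 h)⟩, fun ⟨h, he⟩ => ⟨h, fun _ => he⟩⟩
        rw [e1, e2, min_comm] at hW3
        rw [hcst]
        exact hW3
      · push_neg at hc1 hc2
        refine ⟨Stmt17Aux.dcube d n k, Stmt17Aux.isDyadicCube_dcube d n k, subset_rfl, ?_⟩
        rw [hcst]
        refine le_min ?_ ?_
        · exact hc2
        · rw [Set.inter_eq_right.2 hEQ]
          exact hc1
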